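/- Let M ⊆ S = K[x,y] be a monomial ideal of finite colength (for a grading by coprime positive integers a, b). Fix a minimal generator m_k with k ≥ 1. Let ℓ_1 ≥ ℓ_2 ≥ ⋯ ≥ ℓ_s ≥ 0 be integers such that for each i a direct path p_{k,ℓ_i} from m_k of length ℓ_i exists (with p_{k,0} the empty path), and let P_1, …, P_s be paths from m_k with l(P_1) ≥ l(P_2) ≥ ⋯ ≥ l(P_s) ≥ 0. If ∏_{i=1}^s c_{p_{k,ℓ_i}} = ∏_{i=1}^s c_{P_i} as monomials in K[c_i^ℓ : (i,ℓ) ∈ T⁺(M)], then (ℓ_1, …, ℓ_s) ⪰ (l(P_1), …, l(P_s)) in the lexicographic order on ℤ^s. -/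

import Mathlib

/-!
Combinatorial framework for monomial ideals in `K[x,y]`, graded by
`deg x = a`, `deg y = b`.  A monomial `x^α y^β` is represented by the
pair `(α, β) : ℤ × ℤ`; it lies in `S = K[x,y]` when both entries are
nonnegative.
-/

namespace MonId

/-- A (Laurent) monomial `x^α y^β`, represented by its exponent vector. -/
abbrev Mon : Type := ℤ × ℤ

/-- `p` is a genuine monomial of `S = K[x,y]` (nonnegative exponents). -/
def inS (p : Mon) : Prop := 0 ≤ p.1 ∧ 0 ≤ p.2

/-- `M` is (the set of monomials of) a monomial ideal of `S` of finite
colength: it consists of monomials of `S`, is closed under multiplication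
by `x` and by `y`, and its complement in the monomials of `S` is finite. -/
def IsMonIdeal (M : Set Mon) : Prop :=
  (∀ p ∈ M, inS p) ∧
  (∀ p ∈ M, (p.1 + 1, p.2) ∈ M ∧ (p.1, p.2 + 1) ∈ M) ∧
  {p : Mon | inS p ∧ p ∉ M}.Finite

/-- `p` is a minimal monomial generator of the monomial ideal `M`. -/
def IsMinGen (M : Set Mon) (p : Mon) : Prop :=
  p ∈ M ∧ (p.1 - 1, p.2) ∉ M ∧ (p.1, p.2 - 1) ∉ M

/-- `m 0, m 1, …, m e` is the list of minimal generators of `M`, in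
increasing lexicographic order `≺` with `x ≺ y` (equivalently, with
strictly increasing `y`-exponents). -/
def IsGenSeq (M : Set Mon) (e : ℕ) (m : ℕ → Mon) : Prop :=
  (∀ k ≤ e, IsMinGen M (m k)) ∧
  (∀ k, k < e → (m k).2 < (m (k + 1)).2) ∧
  (∀ p, IsMinGen M p → ∃ k ≤ e, m k = p)

/-- Multiplication of the monomial `p` by `r^ℓ`, where `r = x^b y^{-a}`. -/
def rpow (a b ℓ : ℤ) (p : Mon) : Mon := (p.1 + b * ℓ, p.2 - a * ℓ)

/-- `w m i` is `w_i = lcm(m_{i-1}, m_i)` (componentwise max of exponents). -/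
def w (m : ℕ → Mon) (i : ℕ) : Mon :=
  (max (m (i - 1)).1 (m i).1, max (m (i - 1)).2 (m i).2)

/-- The set `T⁺(M)` of positive significant arrows `(i, ℓ)`:
`1 ≤ i ≤ e`, `ℓ ≥ 1`, `m_i r^ℓ ∈ S ∖ M` and `w_i r^ℓ ∈ M`. -/
def Tplus (a b : ℤ) (M : Set Mon) (e : ℕ) (m : ℕ → Mon) : Set (ℕ × ℤ) :=
  {q | 1 ≤ q.1 ∧ q.1 ≤ e ∧ 1 ≤ q.2 ∧ inS (rpow a b q.2 (m q.1)) ∧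
    rpow a b q.2 (m q.1) ∉ M ∧ rpow a b q.2 (w m q.1) ∈ M}

/-- The set `T⁻(M)` of negative significant arrows `(i, ℓ)`:
`0 ≤ i ≤ e - 1`, `ℓ ≤ -1`, `m_i r^ℓ ∈ S ∖ M` and `w_{i+1} r^ℓ ∈ M`. -/
def Tminus (a b : ℤ) (M : Set Mon) (e : ℕ) (m : ℕ → Mon) : Set (ℕ × ℤ) :=
  {q | q.1 < e ∧ q.2 ≤ -1 ∧ inS (rpow a b q.2 (m q.1)) ∧
    rpow a b q.2 (m q.1) ∉ M ∧ rpow a b q.2 (w m (q.1 + 1)) ∈ M}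

/-- `j⁺(p) = max {i : m_i divides p}`. -/
def jplus (e : ℕ) (m : ℕ → Mon) (p : Mon) : ℕ :=
  Nat.findGreatest (fun i => (m i).1 ≤ p.1 ∧ (m i).2 ≤ p.2) e

/-- `j⁻(p) = min {i : m_i divides p}`. -/
noncomputable def jminus (e : ℕ) (m : ℕ → Mon) (p : Mon) : ℕ :=
  sInf {i | i ≤ e ∧ (m i).1 ≤ p.1 ∧ (m i).2 ≤ p.2}

/-- `IsPath a b M e m i P`: `P` is a path from the generator `m_i`, i.e. a
finite sequence of positive significant arrows whose first arrow `(i₁, ℓ₁)`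
has `i₁ ≤ i`, and whose tail is a path from `m_{j⁺(w_{i₁} r^{ℓ₁})}`.
The empty sequence is a path from every generator. -/
def IsPath (a b : ℤ) (M : Set Mon) (e : ℕ) (m : ℕ → Mon) : ℕ → List (ℕ × ℤ) → Prop
  | _, [] => True
  | i, q :: rest => q ∈ Tplus a b M e m ∧ q.1 ≤ i ∧
      IsPath a b M e m (jplus e m (rpow a b q.2 (w m q.1))) rest

/-- The length `l(P) = ℓ₁ + ⋯ + ℓ_s` of a path. -/
def llen (P : List (ℕ × ℤ)) : ℤ := (P.map Prod.snd).sum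

/-- `lm j` is the largest `ℓ` with `(j, ℓ) ∈ T⁺(M)`, and is `0` when no
such arrow exists. -/
def IsLmax (Tp : Set (ℕ × ℤ)) (lm : ℕ → ℤ) : Prop :=
  ∀ j : ℕ, (∀ ℓ : ℤ, (j, ℓ) ∈ Tp → ℓ ≤ lm j) ∧
    ((∃ ℓ : ℤ, (j, ℓ) ∈ Tp) → (j, lm j) ∈ Tp) ∧
    ((¬ ∃ ℓ : ℤ, (j, ℓ) ∈ Tp) → lm j = 0)

/-- `IsZSeq a b e m lm k L`: `L` is the sequence `(z_1, z_2, …)` of arrows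
produced by the greedy procedure started at index `k`: while `i ≥ 1`, if
`ℓ_i > 0` record the arrow `(i, ℓ_i)` and jump to `j⁺(w_i r^{ℓ_i})`,
otherwise decrease `i` by one; stop when `i ≤ 0`. -/
inductive IsZSeq (a b : ℤ) (e : ℕ) (m : ℕ → Mon) (lm : ℕ → ℤ) : ℕ → List (ℕ × ℤ) → Prop where
  | zero : IsZSeq a b e m lm 0 []
  | skip {i : ℕ} {L : List (ℕ × ℤ)} : 1 ≤ i → lm i ≤ 0 →
      IsZSeq a b e m lm (i - 1) L → IsZSeq a b e m lm i L
  | step {i : ℕ} {L : List (ℕ × ℤ)} : 1 ≤ i → 0 < lm i →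
      IsZSeq a b e m lm (jplus e m (rpow a b (lm i) (w m i))) L →
      IsZSeq a b e m lm i ((i, lm i) :: L)

/-- `D` is a direct path from `m_k`: a path which is either a nonempty
initial segment `(z_1, …, z_s)` of the greedy sequence from `k`, or
`(z_1, …, z_s, (i', ℓ'))` where `i'` is the index of `z_{s+1}` and
`1 ≤ ℓ' < ℓ_{i'}`. -/
def IsDirectPath (a b : ℤ) (M : Set Mon) (e : ℕ) (m : ℕ → Mon) (lm : ℕ → ℤ)
    (k : ℕ) (D : List (ℕ × ℤ)) : Prop :=
  IsPath a b M e m k D ∧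
  ∃ L, IsZSeq a b e m lm k L ∧
    ((∃ s : ℕ, 0 < s ∧ s ≤ L.length ∧ D = L.take s) ∨
     (∃ (s : ℕ) (z : ℕ × ℤ) (ℓ' : ℤ), L[s]? = some z ∧ 1 ≤ ℓ' ∧ ℓ' < z.2 ∧
       D = L.take s ++ [(z.1, ℓ')]))

/-- The monomial `c_P = c_{i₁}^{ℓ₁} ⋯ c_{i_s}^{ℓ_s}` associated to a path,
as an element of the polynomial ring with variables `c_i^ℓ` (indexed by
pairs `(i, ℓ)`). -/
noncomputable def cP (K : Type*) [CommSemiring K] (P : List (ℕ × ℤ)) : MvPolynomial (ℕ × ℤ) K :=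
  (P.map MvPolynomial.X).prod

end MonId

open MonId


namespace MonIdAux
open MonId Finset

/-! ### Algebraic layer: extracting counts from the monomial identity -/

noncomputable def toF (Q : List (ℕ × ℤ)) : (ℕ × ℤ) →₀ ℕ :=
  (Q.map fun q => Finsupp.single q 1).sum

lemma cP_eq_monomial (K : Type*) [CommSemiring K] (Q : List (ℕ × ℤ)) :
    cP K Q = MvPolynomial.monomial (toF Q) 1 := by
  induction Q with
  | nil => simp [cP, toF]
  | cons q Q ih =>
    have : toF (q :: Q) = Finsupp.single q 1 + toF Q := by simp [toF]
    rw [cP, List.map_cons, List.prod_cons, ← cP, ih, this, MvPolynomial.X,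
      MvPolynomial.monomial_mul, one_mul]

lemma prod_cP_eq (K : Type*) [Field K] {s : ℕ} (p : Fin s → List (ℕ × ℤ)) :
    ∏ i, cP K (p i) = MvPolynomial.monomial (∑ i, toF (p i)) 1 := by
  classical
  rw [Finset.prod_congr rfl (fun i _ => cP_eq_monomial K (p i))]
  induction (Finset.univ : Finset (Fin s)) using Finset.cons_induction with
  | empty => simp
  | cons a t ha ih =>
    rw [Finset.prod_cons, Finset.sum_cons, ih, MvPolynomial.monomial_mul, one_mul]

lemma toF_apply (Q : List (ℕ × ℤ)) (v : ℕ × ℤ) :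
    toF Q v = Multiset.count v (Q : Multiset (ℕ × ℤ)) := by
  induction Q with
  | nil => simp [toF]
  | cons q Q ih =>
    have : toF (q :: Q) = Finsupp.single q 1 + toF Q := by simp [toF]
    rw [this, ← Multiset.cons_coe, Multiset.count_cons]
    simp only [Finsupp.add_apply, ih, Finsupp.single_apply]
    by_cases h : q = v
    · simp [h, Nat.add_comm]
    · simp [h, Ne.symm h]

lemma counts_of_heq (K : Type*) [Field K] {s : ℕ} (p P : Fin s → List (ℕ × ℤ))
    (heq : ∏ i, cP K (p i) = ∏ i, cP K (P i)) :
    ∀ v : ℕ × ℤ, (∑ i, Multiset.count v ((p i : List (ℕ × ℤ)) : Multiset (ℕ × ℤ)))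
      = ∑ i, Multiset.count v ((P i : List (ℕ × ℤ)) : Multiset (ℕ × ℤ)) := by
  intro v
  rw [prod_cP_eq, prod_cP_eq] at heq
  have h2 := MvPolynomial.monomial_left_injective (one_ne_zero (α := K)) heq
  have h3 := DFunLike.congr_fun h2 v
  simpa [Finsupp.finset_sum_apply, toF_apply] using h3

/-! ### The index-contribution function `cQ` -/

def cQ (Q : List (ℕ × ℤ)) (A : ℕ) : ℤ := (Q.map (fun q => if q.1 = A then q.2 else 0)).sum

lemma cQ_cons (q : ℕ × ℤ) (Q : List (ℕ × ℤ)) (A : ℕ) :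
    cQ (q :: Q) A = (if q.1 = A then q.2 else 0) + cQ Q A := by simp [cQ]

lemma cQ_nonneg {Q : List (ℕ × ℤ)} (h : ∀ q ∈ Q, 0 ≤ q.2) (A : ℕ) : 0 ≤ cQ Q A := by
  induction Q with
  | nil => simp [cQ]
  | cons q Q ih =>
    rw [cQ_cons]
    have h1 : 0 ≤ q.2 := h q (by simp)
    have h2 : 0 ≤ cQ Q A := ih (fun q' hq' => h q' (by simp [hq']))
    positivity

lemma cQ_of_not_mem {Q : List (ℕ × ℤ)} {A : ℕ} (h : ∀ q ∈ Q, q.1 ≠ A) : cQ Q A = 0 := by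
  induction Q with
  | nil => rfl
  | cons q Q ih =>
    rw [cQ_cons, if_neg (h q (by simp)), ih (fun q' hq' => h q' (by simp [hq'])), add_zero]

lemma llen_eq_sum_cQ {Q : List (ℕ × ℤ)} {n : ℕ} (h : ∀ q ∈ Q, q.1 < n) :
    llen Q = ∑ A ∈ Finset.range n, cQ Q A := by
  induction Q with
  | nil => simp [llen, cQ]
  | cons q Q ih =>
    have : ∑ A ∈ Finset.range n, cQ (q :: Q) A
        = (∑ A ∈ Finset.range n, if q.1 = A then q.2 else 0) + ∑ A ∈ Finset.range n, cQ Q A := by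
      rw [← Finset.sum_add_distrib]
      exact Finset.sum_congr rfl (fun A _ => cQ_cons q Q A)
    rw [this, Finset.sum_ite_eq, if_pos (Finset.mem_range.2 (h q (by simp))),
      ← ih (fun q' hq' => h q' (by simp [hq']))]
    simp [llen]

lemma cQ_eq_iff_mem {Q : List (ℕ × ℤ)} {A : ℕ} {v : ℤ}
    (hpw : Q.Pairwise (fun q q' => q'.1 < q.1)) (hpos : ∀ q ∈ Q, 0 < q.2) (hv : v ≠ 0) :
    cQ Q A = v ↔ (A, v) ∈ Q := by
  induction Q with
  | nil => simp [cQ, Ne.symm hv]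
  | cons q Q ih =>
    rw [List.pairwise_cons] at hpw
    by_cases hA : q.1 = A
    · have hz : cQ Q A = 0 := cQ_of_not_mem (fun q' hq' => by
        have := hpw.1 q' hq'; omega)
      rw [cQ_cons, if_pos hA, hz, add_zero]
      constructor
      · intro hqv
        have hq : q = (A, v) := Prod.ext hA hqv
        rw [← hq]; exact List.mem_cons_self
      · intro h
        rcases List.mem_cons.1 h with h | h
        · rw [← h]
        · exact absurd (hpw.1 _ h) (by simp [hA])
    · rw [cQ_cons, if_neg hA, zero_add, ih hpw.2 (fun q' hq' => hpos q' (by simp [hq']))]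
      constructor
      · intro h; exact List.mem_cons_of_mem _ h
      · intro h
        rcases List.mem_cons.1 h with h | h
        · exact absurd (congrArg Prod.fst h.symm) hA
        · exact h

lemma cQ_pos_of_mem {Q : List (ℕ × ℤ)} {A : ℕ} {v : ℤ}
    (hpw : Q.Pairwise (fun q q' => q'.1 < q.1)) (hpos : ∀ q ∈ Q, 0 < q.2)
    (h : (A, v) ∈ Q) : cQ Q A = v :=
  (cQ_eq_iff_mem hpw hpos (by have := hpos _ h; simp only at this; omega)).2 h

/-- number of arrows at index `A` -/
def nzM (Q : List (ℕ × ℤ)) (A : ℕ) : ℕ :=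
  Multiset.countP (fun q : ℕ × ℤ => q.1 = A) (Q : Multiset (ℕ × ℤ))

lemma nzM_eq {Q : List (ℕ × ℤ)} {A : ℕ}
    (hpw : Q.Pairwise (fun q q' => q'.1 < q.1)) (hpos : ∀ q ∈ Q, 0 < q.2) :
    nzM Q A = if cQ Q A = 0 then 0 else 1 := by
  induction Q with
  | nil => simp [nzM, cQ]
  | cons q Q ih =>
    rw [List.pairwise_cons] at hpw
    have hrec := ih hpw.2 (fun q' hq' => hpos q' (by simp [hq']))
    rw [nzM, ← Multiset.cons_coe, Multiset.countP_cons, ← nzM, cQ_cons]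
    by_cases hA : q.1 = A
    · have hz : cQ Q A = 0 := cQ_of_not_mem (fun q' hq' => by have := hpw.1 q' hq'; omega)
      have hnz : nzM Q A = 0 := by rw [hrec, if_pos hz]
      have hq2 : 0 < q.2 := hpos q (by simp)
      rw [hnz, if_pos hA, if_pos hA, hz, add_zero, if_neg (by omega)]
    · rw [if_neg hA, if_neg hA, zero_add, hrec, add_zero]

/-! ### Rearrangement machinery -/

lemma fin_le_strictMono {c s : ℕ} (f : Fin c → Fin s) (hf : StrictMono f) :
    ∀ k : Fin c, (k : ℕ) ≤ (f k : ℕ) := by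
  suffices h : ∀ n (h : n < c), n ≤ (f ⟨n, h⟩ : ℕ) by
    intro k; simpa using h k.1 k.2
  intro n
  induction n with
  | zero => simp
  | succ n ih =>
    intro h
    have h1 : n < c := by omega
    have h2 := hf (show (⟨n, h1⟩ : Fin c) < ⟨n + 1, h⟩ by simp [Fin.lt_def])
    have h3 := ih h1
    rw [Fin.lt_def] at h2
    omega

lemma sum_subset_le {s : ℕ} (y : Fin s → ℤ) (hy : ∀ i j : Fin s, i ≤ j → y j ≤ y i)
    (T : Finset (Fin s)) :
    ∑ j ∈ T, y j ≤ ∑ j ∈ univ.filter (fun i : Fin s => (i : ℕ) < T.card), y j := by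
  classical
  set c := T.card with hc
  have hcs : c ≤ s := hc ▸ (Finset.card_le_card (Finset.subset_univ T)).trans (by simp)
  let emb := T.orderEmbOfFin hc.symm
  have h1 : ∑ j ∈ T, y j = ∑ k : Fin c, y (emb k) := by
    refine (Finset.sum_bij (fun (k : Fin c) _ => emb k) ?_ ?_ ?_ ?_).symm
    · intro k _; exact Finset.orderEmbOfFin_mem T hc.symm k
    · intro k _ k' _ h; exact emb.injective h
    · intro j hj
      have : j ∈ Set.range emb := by
        rw [Finset.range_orderEmbOfFin]; exact hj
      obtain ⟨k, hk⟩ := this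
      exact ⟨k, Finset.mem_univ k, hk⟩
    · intro k _; rfl
  have h2 : ∑ j ∈ univ.filter (fun i : Fin s => (i : ℕ) < c), y j
      = ∑ k : Fin c, y ⟨k.1, lt_of_lt_of_le k.2 hcs⟩ := by
    refine (Finset.sum_bij (fun (k : Fin c) _ => (⟨k.1, lt_of_lt_of_le k.2 hcs⟩ : Fin s)) ?_ ?_ ?_ ?_).symm
    · intro k _; simp [k.2]
    · intro k _ k' _ h; exact Fin.ext (congrArg Fin.val h : _)
    · intro j hj
      simp only [Finset.mem_filter] at hj
      exact ⟨⟨j.1, hj.2⟩, Finset.mem_univ _, Fin.ext rfl⟩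
    · intro k _; rfl
  rw [h1, h2]
  apply Finset.sum_le_sum
  intro k _
  apply hy
  rw [Fin.le_def]
  exact fin_le_strictMono emb emb.strictMono k

lemma card_filt_le {s t : ℕ} : (univ.filter (fun i : Fin s => (i : ℕ) < t)).card ≤ t := by
  classical
  have := Finset.card_le_card_of_injOn (fun i : Fin s => (i : ℕ))
    (t := Finset.range t) (s := univ.filter (fun i : Fin s => (i : ℕ) < t))
    (by intro i hi; simp only [Finset.mem_coe, Finset.mem_filter] at hi; simp [hi.2])
    (fun i _ j _ h => Fin.ext h)
  simpa using this

/-- the key rearrangement lemma -/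
lemma abs_lemma {s : ℕ} (x y : Fin s → ℤ)
    (hfib : ∀ v : ℤ, (univ.filter fun i => x i = v).card = (univ.filter fun i => y i = v).card)
    (hy : ∀ i j : Fin s, i ≤ j → y j ≤ y i) (hynn : ∀ i, 0 ≤ y i) (t : ℕ) :
    ∑ i ∈ univ.filter (fun i : Fin s => (i : ℕ) < t), x i
      ≤ ∑ i ∈ univ.filter (fun i : Fin s => (i : ℕ) < t), y i := by
  classical
  have hms : (univ.val.map x) = univ.val.map y := by
    apply Multiset.ext.2
    intro v
    rw [Multiset.count_map, Multiset.count_map]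
    have h1 : Multiset.filter (fun a => v = x a) univ.val = (univ.filter fun i => x i = v).val := by
      rw [Finset.filter_val]
      exact Multiset.filter_congr (fun i _ => by constructor <;> exact Eq.symm)
    have h2 : Multiset.filter (fun a => v = y a) univ.val = (univ.filter fun i => y i = v).val := by
      rw [Finset.filter_val]
      exact Multiset.filter_congr (fun i _ => by constructor <;> exact Eq.symm)
    rw [h1, h2]
    exact hfib v
  have hperm : (List.ofFn x).Perm (List.ofFn y) := by
    rw [← Multiset.coe_eq_coe, ← Fin.univ_val_map, ← Fin.univ_val_map]
    exact hms
  have hmx := Tuple.monotone_sort x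
  have hmy := Tuple.monotone_sort y
  have hsorteq : x ∘ (Tuple.sort x) = y ∘ (Tuple.sort y) := by
    apply List.ofFn_injective
    refine List.Perm.eq_of_sortedLE (List.sortedLE_ofFn_iff.2 hmx) (List.sortedLE_ofFn_iff.2 hmy) ?_
    exact ((Tuple.sort x).ofFn_comp_perm x).trans (hperm.trans ((Tuple.sort y).ofFn_comp_perm y).symm)
  set σ : Equiv.Perm (Fin s) := (Tuple.sort x).symm.trans (Tuple.sort y) with hσ
  have hxy : ∀ i, x i = y (σ i) := by
    intro i
    have := congrFun hsorteq ((Tuple.sort x).symm i)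
    simpa [hσ, Function.comp] using this
  calc ∑ i ∈ univ.filter (fun i : Fin s => (i : ℕ) < t), x i
      = ∑ i ∈ univ.filter (fun i : Fin s => (i : ℕ) < t), y (σ i) :=
        Finset.sum_congr rfl (fun i _ => hxy i)
    _ = ∑ j ∈ (univ.filter (fun i : Fin s => (i : ℕ) < t)).image σ, y j := by
        rw [Finset.sum_image (fun i _ j _ h => σ.injective h)]
    _ ≤ ∑ j ∈ univ.filter (fun i : Fin s =>
          (i : ℕ) < ((univ.filter (fun i : Fin s => (i : ℕ) < t)).image σ).card), y j :=
        sum_subset_le y hy _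
    _ ≤ ∑ j ∈ univ.filter (fun i : Fin s => (i : ℕ) < t), y j := by
        apply Finset.sum_le_sum_of_subset_of_nonneg
        · intro j hj
          simp only [Finset.mem_filter] at *
          refine ⟨Finset.mem_univ _, lt_of_lt_of_le hj.2 ?_⟩
          rw [Finset.card_image_of_injective _ σ.injective]
          exact card_filt_le
        · intro j _ _; exact hynn j

/-! ### Structural lemmas about paths and greedy sequences -/

variable {a b : ℤ} {M : Set Mon} {e : ℕ} {m : ℕ → Mon} {lm : ℕ → ℤ}

lemma ymono (hg : IsGenSeq M e m) : ∀ {i j : ℕ}, i < j → j ≤ e → (m i).2 < (m j).2 := by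
  intro i j
  induction j with
  | zero => omega
  | succ j ih =>
    intro hij hje
    rcases Nat.lt_succ_iff_lt_or_eq.1 hij with h | h
    · exact lt_trans (ih h (by omega)) (hg.2.1 j (by omega))
    · rcases h with rfl; exact hg.2.1 i (by omega)

lemma jplus_lt (hg : IsGenSeq M e m) (ha : 1 ≤ a) {q : ℕ × ℤ}
    (hT : q ∈ Tplus a b M e m) : jplus e m (rpow a b q.2 (w m q.1)) < q.1 := by
  obtain ⟨hi1, hie, hl1, _, _, _⟩ := hT
  by_contra hcon
  push_neg at hcon
  set J := jplus e m (rpow a b q.2 (w m q.1)) with hJdef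
  have hJ0 : J ≠ 0 := by omega
  have hPJ := Nat.findGreatest_of_ne_zero hJdef.symm hJ0
  have hJe : J ≤ e := Nat.findGreatest_le e
  have hw2 : (w m q.1).2 = (m q.1).2 := by
    have h := ymono hg (show q.1 - 1 < q.1 by omega) hie
    simp only [w]
    exact max_eq_right (le_of_lt h)
  have h6 : (m J).2 ≤ (m q.1).2 - a * q.2 := by
    have := hPJ.2
    simpa [rpow, hw2] using this
  have h5 : (m q.1).2 ≤ (m J).2 := by
    rcases Nat.lt_or_ge q.1 J with h | h
    · exact le_of_lt (ymono hg h hJe)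
    · have : q.1 = J := by omega
      rw [this]
  have hpos : 0 < a * q.2 := mul_pos (by omega) (by omega)
  omega

lemma isPath_facts (hg : IsGenSeq M e m) (ha : 1 ≤ a) :
    ∀ {Q : List (ℕ × ℤ)} {k : ℕ}, IsPath a b M e m k Q →
    (∀ q ∈ Q, q ∈ Tplus a b M e m) ∧ (∀ q ∈ Q, q.1 ≤ k) ∧
      Q.Pairwise (fun q q' => q'.1 < q.1) := by
  intro Q
  induction Q with
  | nil => intro k _; simp
  | cons q Q ih =>
    intro k hP
    obtain ⟨hT, hqk, htail⟩ := hP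
    obtain ⟨ih1, ih2, ih3⟩ := ih htail
    have hlt : jplus e m (rpow a b q.2 (w m q.1)) < q.1 := jplus_lt hg ha hT
    refine ⟨?_, ?_, ?_⟩
    · intro q' hq'
      rcases List.mem_cons.1 hq' with h | h
      · rw [h]; exact hT
      · exact ih1 q' h
    · intro q' hq'
      rcases List.mem_cons.1 hq' with h | h
      · rw [h]; exact hqk
      · exact le_trans (ih2 q' h) (le_trans (le_of_lt hlt) hqk)
    · rw [List.pairwise_cons]
      exact ⟨fun q' hq' => lt_of_le_of_lt (ih2 q' hq') hlt, ih3⟩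

lemma zseq_pos : ∀ {i : ℕ} {L : List (ℕ × ℤ)}, IsZSeq a b e m lm i L → ∀ q ∈ L, 0 < q.2 := by
  intro i L h
  induction h with
  | zero => simp
  | skip _ _ _ ih => exact ih
  | step h1 h2 _ ih =>
    intro q hq
    rcases List.mem_cons.1 hq with h | h
    · rw [h]; exact h2
    · exact ih q h

lemma zseq_unique : ∀ {i : ℕ} {L : List (ℕ × ℤ)}, IsZSeq a b e m lm i L →
    ∀ {L' : List (ℕ × ℤ)}, IsZSeq a b e m lm i L' → L = L' := by
  intro i L h
  induction h with
  | zero =>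
    intro L' h'
    cases h' with
    | zero => rfl
    | skip h1 _ _ => omega
    | step h1 _ _ => omega
  | skip h1 h2 _ ih =>
    intro L' h'
    cases h' with
    | zero => omega
    | skip _ _ hprev' => exact ih hprev'
    | step _ hlm _ => omega
  | step h1 h2 _ ih =>
    intro L' h'
    cases h' with
    | zero => omega
    | skip _ hlm _ => omega
    | step _ _ hprev' => rw [ih hprev']

/-! ### Shapes of direct paths -/

def Shape (L D : List (ℕ × ℤ)) : Prop :=
  (∃ s : ℕ, 0 < s ∧ s ≤ L.length ∧ D = L.take s) ∨
  (∃ (s : ℕ) (z : ℕ × ℤ) (ℓ' : ℤ), L[s]? = some z ∧ 1 ≤ ℓ' ∧ ℓ' < z.2 ∧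
    D = L.take s ++ [(z.1, ℓ')])

lemma llen_append (A B : List (ℕ × ℤ)) : llen (A ++ B) = llen A + llen B := by
  simp [llen]

lemma llen_take_succ {L : List (ℕ × ℤ)} {s : ℕ} {z : ℕ × ℤ} (h : L[s]? = some z) :
    llen (L.take (s + 1)) = llen (L.take s) + z.2 := by
  rw [List.take_succ, llen_append]
  rw [h]
  simp [llen]

lemma llen_take_le {L : List (ℕ × ℤ)} (hpos : ∀ q ∈ L, 0 < q.2) :
    ∀ {u v : ℕ}, u ≤ v → llen (L.take u) ≤ llen (L.take v) := by
  intro u v huv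
  induction v with
  | zero => simp_all
  | succ v ih =>
    rcases Nat.lt_succ_iff_lt_or_eq.1 (Nat.lt_succ_of_le huv) with h | h
    · have h1 := ih (by omega)
      rcases h2 : L[v]? with _ | z
      · rw [List.take_succ] at *
        rw [h2]
        simpa [llen_append, llen] using h1
      · have h3 := llen_take_succ h2
        have h4 : 0 < z.2 := hpos z (List.mem_of_getElem? h2)
        omega
    · rw [h]

lemma llen_take_lt {L : List (ℕ × ℤ)} (hpos : ∀ q ∈ L, 0 < q.2) {u v : ℕ}
    (huv : u < v) (hv : v ≤ L.length) : llen (L.take u) < llen (L.take v) := by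
  have h : L[u]? = some (L.get ⟨u, by omega⟩) := List.getElem?_eq_getElem (by omega)
  have h1 := llen_take_succ (L := L) (s := u) (z := L.get ⟨u, by omega⟩) h
  have h2 : 0 < (L.get ⟨u, by omega⟩).2 := hpos _ (L.get_mem _)
  have h3 := llen_take_le hpos (show u + 1 ≤ v by omega)
  omega

lemma llen_take_nonneg {L : List (ℕ × ℤ)} (hpos : ∀ q ∈ L, 0 < q.2) (s : ℕ) :
    0 ≤ llen (L.take s) := by
  have := llen_take_le hpos (Nat.zero_le s)
  simpa [llen] using this

lemma mem_take_of_le {L : List (ℕ × ℤ)} {q : ℕ × ℤ} {u v : ℕ} (h : q ∈ L.take u)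
    (huv : u ≤ v) : q ∈ L.take v := by
  have h1 : L.take u = (L.take v).take u := by
    rw [List.take_take, min_eq_left huv]
  rw [h1] at h
  exact List.take_subset _ _ h

lemma get_mem_take {L : List (ℕ × ℤ)} {z : ℕ × ℤ} {u v : ℕ} (h : L[u]? = some z)
    (huv : u < v) : z ∈ L.take v := by
  have h1 : (L.take v)[u]? = some z := by
    rw [List.getElem?_take_of_lt huv]; exact h
  exact List.mem_of_getElem? h1

lemma llen_shape (L D : List (ℕ × ℤ)) (hS : Shape L D) :
    (∃ s : ℕ, 0 < s ∧ s ≤ L.length ∧ D = L.take s ∧ llen D = llen (L.take s)) ∨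
    (∃ (s : ℕ) (z : ℕ × ℤ) (ℓ' : ℤ), L[s]? = some z ∧ 1 ≤ ℓ' ∧ ℓ' < z.2 ∧
      D = L.take s ++ [(z.1, ℓ')] ∧ llen D = llen (L.take s) + ℓ') := by
  rcases hS with ⟨s, h1, h2, h3⟩ | ⟨s, z, ℓ', h1, h2, h3, h4⟩
  · exact Or.inl ⟨s, h1, h2, h3, by rw [h3]⟩
  · exact Or.inr ⟨s, z, ℓ', h1, h2, h3, h4, by rw [h4, llen_append]; simp [llen]⟩

lemma shape_llen_pos {L D : List (ℕ × ℤ)} (hpos : ∀ q ∈ L, 0 < q.2) (hS : Shape L D) :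
    0 < llen D := by
  rcases llen_shape L D hS with ⟨s, h1, h2, h3, h4⟩ | ⟨s, z, ℓ', h1, h2, h3, h4, h5⟩
  · rw [h4]
    calc (0 : ℤ) = llen (L.take 0) := by simp [llen]
    _ < llen (L.take s) := llen_take_lt hpos h1 h2
  · have := llen_take_nonneg hpos s
    omega

/-- The key domination property between two "direct path shaped" lists on a
common backbone `L`. -/
lemma shape_dom {L D D' : List (ℕ × ℤ)} (hpos : ∀ q ∈ L, 0 < q.2)
    (hD : Shape L D) (hD' : Shape L D') (hle : llen D' ≤ llen D) :
    ∀ q' ∈ D', ∃ q ∈ D, q'.1 = q.1 ∧ q'.2 ≤ q.2 := by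
  intro q' hq'
  rcases llen_shape L D hD with ⟨s, hs0, hslen, hDeq, hDlen⟩ | ⟨s, z, ρ, hzget, hρ1, hρlt, hDeq, hDlen⟩
  all_goals rcases llen_shape L D' hD' with ⟨s', hs0', hslen', hD'eq, hD'len⟩ | ⟨s', z', ρ', hzget', hρ1', hρlt', hD'eq, hD'len⟩
  · have hss : s' ≤ s := by
      by_contra hcon
      have := llen_take_lt hpos (show s < s' by omega) hslen'
      omega
    refine ⟨q', ?_, rfl, le_refl _⟩
    rw [hDeq]
    rw [hD'eq] at hq'
    exact mem_take_of_le hq' hss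
  · have hslen' : s' < L.length := (List.getElem?_eq_some_iff.1 hzget').1
    have hss : s' < s := by
      by_contra hcon
      have h1 := llen_take_le hpos (show s ≤ s' by omega)
      omega
    rw [hD'eq] at hq'
    rcases List.mem_append.1 hq' with h | h
    · refine ⟨q', ?_, rfl, le_refl _⟩
      rw [hDeq]
      exact mem_take_of_le h (by omega)
    · have hq'eq : q' = (z'.1, ρ') := List.mem_singleton.1 h
      refine ⟨z', ?_, by rw [hq'eq], by rw [hq'eq]; exact le_of_lt hρlt'⟩
      rw [hDeq]
      exact get_mem_take hzget' hss
  · have hslen : s < L.length := (List.getElem?_eq_some_iff.1 hzget).1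
    have hFs1 : llen (L.take (s+1)) = llen (L.take s) + z.2 := llen_take_succ hzget
    have hss : s' ≤ s := by
      by_contra hcon
      have h1 := llen_take_le hpos (show s + 1 ≤ s' by omega)
      omega
    refine ⟨q', ?_, rfl, le_refl _⟩
    rw [hDeq]
    rw [hD'eq] at hq'
    exact List.mem_append_left _ (mem_take_of_le hq' hss)
  · have hslen : s < L.length := (List.getElem?_eq_some_iff.1 hzget).1
    have hslen' : s' < L.length := (List.getElem?_eq_some_iff.1 hzget').1
    have hFs1 : llen (L.take (s+1)) = llen (L.take s) + z.2 := llen_take_succ hzget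
    have hss : s' ≤ s := by
      by_contra hcon
      have h1 := llen_take_le hpos (show s + 1 ≤ s' by omega)
      omega
    rw [hD'eq] at hq'
    rcases List.mem_append.1 hq' with h | h
    · refine ⟨q', ?_, rfl, le_refl _⟩
      rw [hDeq]
      exact List.mem_append_left _ (mem_take_of_le h hss)
    · have hq'eq : q' = (z'.1, ρ') := List.mem_singleton.1 h
      rcases Nat.lt_or_ge s' s with hlt | hge
      · refine ⟨z', ?_, by rw [hq'eq], by rw [hq'eq]; exact le_of_lt hρlt'⟩
        rw [hDeq]
        exact List.mem_append_left _ (get_mem_take hzget' hlt)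
      · have hseq : s' = s := by omega
        subst hseq
        have hzz : z' = z := (Option.some.inj (hzget ▸ hzget')).symm
        refine ⟨(z.1, ρ), ?_, by rw [hq'eq, hzz], ?_⟩
        · rw [hDeq]
          exact List.mem_append_right _ (List.mem_singleton.2 rfl)
        · rw [hq'eq]
          simp only
          omega

end MonIdAux

/-- Claim `cl:lexicographic1`.  Let `ℓ_1 ≥ ⋯ ≥ ℓ_s ≥ 0`
be such that direct paths `p_{k,ℓ_i}` from `m_k` of length `ℓ_i` exist
(the empty path for `ℓ_i = 0`), and let `P_1, …, P_s` be paths from `m_k`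
with `l(P_1) ≥ ⋯ ≥ l(P_s) ≥ 0`.  If `∏ c_{p_{k,ℓ_i}} = ∏ c_{P_i}` as
monomials in `K[c_i^ℓ : (i,ℓ) ∈ T⁺(M)]`, then
`(ℓ_1, …, ℓ_s) ⪰ (l(P_1), …, l(P_s))` lexicographically. -/
theorem directPath_products_lex
    (K : Type*) [Field K]
    (a b : ℤ) (ha : 1 ≤ a) (hb : 1 ≤ b) (hab : IsCoprime a b)
    (M : Set Mon) (hM : IsMonIdeal M) (e : ℕ) (m : ℕ → Mon)
    (hg : IsGenSeq M e m)
    (lm : ℕ → ℤ) (hlm : IsLmax (Tplus a b M e m) lm)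
    (k : ℕ) (hk1 : 1 ≤ k) (hke : k ≤ e)
    (s : ℕ) (ℓs : Fin s → ℤ)
    (hmono : ∀ i j : Fin s, i ≤ j → ℓs j ≤ ℓs i) (hnn : ∀ i, 0 ≤ ℓs i)
    (p : Fin s → List (ℕ × ℤ))
    (hp : ∀ i, (ℓs i = 0 ∧ p i = []) ∨
      (IsDirectPath a b M e m lm k (p i) ∧ llen (p i) = ℓs i))
    (P : Fin s → List (ℕ × ℤ)) (hP : ∀ i, IsPath a b M e m k (P i))
    (hPmono : ∀ i j : Fin s, i ≤ j → llen (P j) ≤ llen (P i))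
    (hPnn : ∀ i, 0 ≤ llen (P i))
    (heq : ∏ i, cP K (p i) = ∏ i, cP K (P i)) :
    (∀ i, ℓs i = llen (P i)) ∨
      ∃ i : Fin s, llen (P i) < ℓs i ∧ ∀ j < i, ℓs j = llen (P j) := by
    classical
  open MonIdAux Finset in
  by_cases hall : ∀ i, ℓs i = llen (P i)
  · exact Or.inl hall
  push_neg at hall
  -- facts about the paths P i
  have hPf : ∀ i, (∀ q ∈ P i, q ∈ Tplus a b M e m) ∧ (∀ q ∈ P i, q.1 ≤ k) ∧
      (P i).Pairwise (fun q q' => q'.1 < q.1) := fun i => isPath_facts hg ha (hP i)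
  -- facts about the direct paths p i
  have hpf : ∀ i, (∀ q ∈ p i, q ∈ Tplus a b M e m) ∧ (∀ q ∈ p i, q.1 ≤ k) ∧
      (p i).Pairwise (fun q q' => q'.1 < q.1) := by
    intro i
    rcases hp i with ⟨_, hnil⟩ | ⟨hdir, _⟩
    · rw [hnil]; simp
    · exact isPath_facts hg ha hdir.1
  have hPpos : ∀ i, ∀ q ∈ P i, 0 < q.2 := by
    intro i q hq
    have := ((hPf i).1 q hq).2.2.1
    omega
  have hppos : ∀ i, ∀ q ∈ p i, 0 < q.2 := by
    intro i q hq
    have := ((hpf i).1 q hq).2.2.1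
    omega
  have hplen : ∀ i, llen (p i) = ℓs i := by
    intro i
    rcases hp i with ⟨h0, hnil⟩ | ⟨_, hl⟩
    · rw [hnil, h0]; rfl
    · exact hl
  -- domination between the direct paths
  have hdom : ∀ i j : Fin s, i ≤ j → ∀ q' ∈ p j, ∃ q ∈ p i, q'.1 = q.1 ∧ q'.2 ≤ q.2 := by
    intro i j hij q' hq'
    rcases hp j with ⟨_, hnilj⟩ | ⟨hdirj, hlj⟩
    · rw [hnilj] at hq'; simp at hq'
    · obtain ⟨hpathj, Lj, hZj, hshapej⟩ := hdirj
      rcases hp i with ⟨h0i, hnili⟩ | ⟨hdiri, hli⟩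
      · exfalso
        have hposj := shape_llen_pos (zseq_pos hZj) hshapej
        have h1 : llen (p j) = ℓs j := hplen j
        have h2 := hmono i j hij
        rw [h0i] at h2
        omega
      · obtain ⟨hpathi, Li, hZi, hshapei⟩ := hdiri
        have hLL : Li = Lj := zseq_unique hZi hZj
        subst hLL
        have hle : llen (p j) ≤ llen (p i) := by
          rw [hplen i, hplen j]; exact hmono i j hij
        exact shape_dom (zseq_pos hZi) hshapei hshapej hle q' hq'
  -- counts from the monomial identity
  have hcount := counts_of_heq K p P heq
  -- big multiset equality
  have hbig : (∑ i, ((p i : List (ℕ × ℤ)) : Multiset (ℕ × ℤ)))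
      = ∑ i, ((P i : List (ℕ × ℤ)) : Multiset (ℕ × ℤ)) := by
    apply Multiset.ext.2
    intro v
    have h1 : Multiset.count v (∑ i, ((p i : List (ℕ × ℤ)) : Multiset (ℕ × ℤ)))
        = ∑ i, Multiset.count v ((p i : List (ℕ × ℤ)) : Multiset (ℕ × ℤ)) := by
      exact map_sum (Multiset.countAddMonoidHom v)
        (fun i => ((p i : List (ℕ × ℤ)) : Multiset (ℕ × ℤ))) Finset.univ
    have h2 : Multiset.count v (∑ i, ((P i : List (ℕ × ℤ)) : Multiset (ℕ × ℤ)))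
        = ∑ i, Multiset.count v ((P i : List (ℕ × ℤ)) : Multiset (ℕ × ℤ)) := by
      exact map_sum (Multiset.countAddMonoidHom v)
        (fun i => ((P i : List (ℕ × ℤ)) : Multiset (ℕ × ℤ))) Finset.univ
    rw [h1, h2]
    exact hcount v
  have hnzsum : ∀ A : ℕ, (∑ i, nzM (p i) A) = ∑ i, nzM (P i) A := by
    intro A
    have h1 : (∑ i, nzM (p i) A)
        = Multiset.countP (fun q : ℕ × ℤ => q.1 = A) (∑ i, ((p i : List (ℕ × ℤ)) : Multiset (ℕ × ℤ))) := by
      have hhom := map_sum (Multiset.countPAddMonoidHom (fun q : ℕ × ℤ => q.1 = A))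
        (fun i => ((p i : List (ℕ × ℤ)) : Multiset (ℕ × ℤ))) Finset.univ
      simp only [Multiset.coe_countPAddMonoidHom] at hhom
      rw [hhom]
      rfl
    have h2 : (∑ i, nzM (P i) A)
        = Multiset.countP (fun q : ℕ × ℤ => q.1 = A) (∑ i, ((P i : List (ℕ × ℤ)) : Multiset (ℕ × ℤ))) := by
      have hhom := map_sum (Multiset.countPAddMonoidHom (fun q : ℕ × ℤ => q.1 = A))
        (fun i => ((P i : List (ℕ × ℤ)) : Multiset (ℕ × ℤ))) Finset.univ
      simp only [Multiset.coe_countPAddMonoidHom] at hhom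
      rw [hhom]
      rfl
    rw [h1, h2, hbig]
  -- nodup
  have hPnd : ∀ i, (P i).Nodup := by
    intro i
    exact ((hPf i).2.2).imp (fun {q q'} h => by intro he; rw [he] at h; omega)
  have hpnd : ∀ i, (p i).Nodup := by
    intro i
    exact ((hpf i).2.2).imp (fun {q q'} h => by intro he; rw [he] at h; omega)
  -- the per-index fiber equality
  have hfib : ∀ (A : ℕ) (v : ℤ),
      (univ.filter fun i : Fin s => cQ (P i) A = v).card
        = (univ.filter fun i : Fin s => cQ (p i) A = v).card := by
    intro A v
    by_cases hv : v = 0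
    · subst hv
      have hnzP : ∀ i, nzM (P i) A = if cQ (P i) A = 0 then 0 else 1 :=
        fun i => nzM_eq ((hPf i).2.2) (hPpos i)
      have hnzp : ∀ i, nzM (p i) A = if cQ (p i) A = 0 then 0 else 1 :=
        fun i => nzM_eq ((hpf i).2.2) (hppos i)
      have h1 : (univ.filter fun i : Fin s => ¬(cQ (P i) A = 0)).card = ∑ i, nzM (P i) A := by
        rw [Finset.card_filter]
        exact Finset.sum_congr rfl (fun i _ => by rw [hnzP i]; by_cases h : cQ (P i) A = 0 <;> simp [h])
      have h2 : (univ.filter fun i : Fin s => ¬(cQ (p i) A = 0)).card = ∑ i, nzM (p i) A := by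
        rw [Finset.card_filter]
        exact Finset.sum_congr rfl (fun i _ => by rw [hnzp i]; by_cases h : cQ (p i) A = 0 <;> simp [h])
      have h3 := Finset.card_filter_add_card_filter_not
        (s := (univ : Finset (Fin s))) (p := fun i => cQ (P i) A = 0)
      have h4 := Finset.card_filter_add_card_filter_not
        (s := (univ : Finset (Fin s))) (p := fun i => cQ (p i) A = 0)
      have h5 := hnzsum A
      omega
    · have h1 : (univ.filter fun i : Fin s => cQ (P i) A = v).card
          = ∑ i, Multiset.count (A, v) ((P i : List (ℕ × ℤ)) : Multiset (ℕ × ℤ)) := by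
        rw [Finset.card_filter]
        refine Finset.sum_congr rfl (fun i _ => ?_)
        by_cases hmem : (A, v) ∈ P i
        · rw [if_pos ((cQ_eq_iff_mem ((hPf i).2.2) (hPpos i) hv).2 hmem)]
          exact (Multiset.count_eq_one_of_mem ((Multiset.coe_nodup).2 (hPnd i))
            ((Multiset.mem_coe).2 hmem)).symm
        · rw [if_neg (fun hc => hmem ((cQ_eq_iff_mem ((hPf i).2.2) (hPpos i) hv).1 hc))]
          exact (Multiset.count_eq_zero_of_notMem
            (fun hc => hmem ((Multiset.mem_coe).1 hc))).symm
      have h2 : (univ.filter fun i : Fin s => cQ (p i) A = v).card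
          = ∑ i, Multiset.count (A, v) ((p i : List (ℕ × ℤ)) : Multiset (ℕ × ℤ)) := by
        rw [Finset.card_filter]
        refine Finset.sum_congr rfl (fun i _ => ?_)
        by_cases hmem : (A, v) ∈ p i
        · rw [if_pos ((cQ_eq_iff_mem ((hpf i).2.2) (hppos i) hv).2 hmem)]
          exact (Multiset.count_eq_one_of_mem ((Multiset.coe_nodup).2 (hpnd i))
            ((Multiset.mem_coe).2 hmem)).symm
        · rw [if_neg (fun hc => hmem ((cQ_eq_iff_mem ((hpf i).2.2) (hppos i) hv).1 hc))]
          exact (Multiset.count_eq_zero_of_notMem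
            (fun hc => hmem ((Multiset.mem_coe).1 hc))).symm
      rw [h1, h2, hcount (A, v)]
  -- y is antitone and nonnegative
  have hyanti : ∀ (A : ℕ) (i j : Fin s), i ≤ j → cQ (p j) A ≤ cQ (p i) A := by
    intro A i j hij
    by_cases h0 : cQ (p j) A = 0
    · rw [h0]
      exact cQ_nonneg (fun q hq => le_of_lt (hppos i q hq)) A
    · have hmem : (A, cQ (p j) A) ∈ p j :=
        (cQ_eq_iff_mem ((hpf j).2.2) (hppos j) h0).1 rfl
      obtain ⟨q, hq, hidx, hle⟩ := hdom i j hij _ hmem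
      have hq' : (A, q.2) ∈ p i := by
        have : q = (A, q.2) := Prod.ext (by exact hidx.symm) rfl
        rw [← this]; exact hq
      have := cQ_pos_of_mem ((hpf i).2.2) (hppos i) hq'
      rw [this]
      exact hle
  -- key prefix-sum inequality
  have key : ∀ t : ℕ, ∑ i ∈ univ.filter (fun i : Fin s => (i : ℕ) < t), llen (P i)
      ≤ ∑ i ∈ univ.filter (fun i : Fin s => (i : ℕ) < t), ℓs i := by
    intro t
    have hre : ∀ i : Fin s, llen (P i) = ∑ A ∈ Finset.range (e+1), cQ (P i) A := by
      intro i
      exact llen_eq_sum_cQ (fun q hq => by have := ((hPf i).1 q hq).2.1; omega)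
    have hre' : ∀ i : Fin s, ℓs i = ∑ A ∈ Finset.range (e+1), cQ (p i) A := by
      intro i
      rw [← hplen i]
      exact llen_eq_sum_cQ (fun q hq => by have := ((hpf i).1 q hq).2.1; omega)
    calc ∑ i ∈ univ.filter (fun i : Fin s => (i : ℕ) < t), llen (P i)
        = ∑ i ∈ univ.filter (fun i : Fin s => (i : ℕ) < t), ∑ A ∈ Finset.range (e+1), cQ (P i) A :=
          Finset.sum_congr rfl (fun i _ => hre i)
      _ = ∑ A ∈ Finset.range (e+1), ∑ i ∈ univ.filter (fun i : Fin s => (i : ℕ) < t), cQ (P i) A :=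
          Finset.sum_comm
      _ ≤ ∑ A ∈ Finset.range (e+1), ∑ i ∈ univ.filter (fun i : Fin s => (i : ℕ) < t), cQ (p i) A := by
          apply Finset.sum_le_sum
          intro A _
          exact abs_lemma (fun i => cQ (P i) A) (fun i => cQ (p i) A) (hfib A) (hyanti A)
            (fun i => cQ_nonneg (fun q hq => le_of_lt (hppos i q hq)) A) t
      _ = ∑ i ∈ univ.filter (fun i : Fin s => (i : ℕ) < t), ∑ A ∈ Finset.range (e+1), cQ (p i) A :=
          Finset.sum_comm
      _ = ∑ i ∈ univ.filter (fun i : Fin s => (i : ℕ) < t), ℓs i :=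
          Finset.sum_congr rfl (fun i _ => (hre' i).symm)
  -- pick the minimal discrepancy
  obtain ⟨i0, hi0⟩ := hall
  have hTne : (univ.filter fun i : Fin s => ℓs i ≠ llen (P i)).Nonempty :=
    ⟨i0, Finset.mem_filter.2 ⟨Finset.mem_univ _, hi0⟩⟩
  set t := (univ.filter fun i : Fin s => ℓs i ≠ llen (P i)).min' hTne with ht
  have htmem : ℓs t ≠ llen (P t) :=
    (Finset.mem_filter.1 ((univ.filter fun i : Fin s => ℓs i ≠ llen (P i)).min'_mem hTne)).2
  have heqs : ∀ j, j < t → ℓs j = llen (P j) := by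
    intro j hj
    by_contra hc
    have : t ≤ j := Finset.min'_le _ j (Finset.mem_filter.2 ⟨Finset.mem_univ _, hc⟩)
    exact absurd (lt_of_le_of_lt this hj) (lt_irrefl _)
  refine Or.inr ⟨t, ?_, heqs⟩
  -- show llen (P t) < ℓs t
  have hsplit : (univ.filter fun i : Fin s => (i : ℕ) < (t : ℕ) + 1)
      = insert t (univ.filter fun i : Fin s => (i : ℕ) < (t : ℕ)) := by
    ext i
    simp only [Finset.mem_filter, Finset.mem_insert, Finset.mem_univ, true_and]
    constructor
    · intro h
      rcases Nat.lt_succ_iff_lt_or_eq.1 h with h | h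
      · exact Or.inr h
      · exact Or.inl (Fin.ext h)
    · rintro (h | h)
      · rw [h]; omega
      · omega
  have htni : t ∉ (univ.filter fun i : Fin s => (i : ℕ) < (t : ℕ)) := by
    simp
  have hk1' := key ((t : ℕ) + 1)
  rw [hsplit, Finset.sum_insert htni, Finset.sum_insert htni] at hk1'
  have hsum_eq : ∑ i ∈ univ.filter (fun i : Fin s => (i : ℕ) < (t : ℕ)), llen (P i)
      = ∑ i ∈ univ.filter (fun i : Fin s => (i : ℕ) < (t : ℕ)), ℓs i := by
    refine Finset.sum_congr rfl (fun i hi => ?_)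
    have : i < t := by
      have := (Finset.mem_filter.1 hi).2
      rwa [Fin.lt_def]
    exact (heqs i this).symm
  have hle : llen (P t) ≤ ℓs t := by omega
  omega
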